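/- Let λ_1 ≥ λ_2 ≥ ⋯ ≥ λ_d be reals, and suppose there is j* ∈ {1,…,d−1} with ∑_{i=1}^{j*} λ_i ≥ 0 and ∑_{i=1}^{j*+1} λ_i < 0. Let (Λ_j)_{j=0}^d be reals with Λ_0 = 0 and Λ_j ≤ ∑_{i=1}^j λ_i for all j, and let j*_Λ be the largest index j ∈ {0,…,d−1} with Λ_j ≥ 0. Then j*_Λ is well-defined, j*_Λ ≤ j*, and D_s := j*_Λ + Λ_{j*_Λ}/(Λ_{j*_Λ} − Λ_{j*_Λ+1}) satisfies D_s ≤ j* + (∑_{i=1}^{j*} λ_i)/|λ_{j*+1}|. -/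
import Mathlib


/-- **Comparison of the subadditive-limit sharpness dimension with the
one-step sharpness dimension.**
Let `λ_1 ≥ ⋯ ≥ λ_d` with `∑_{i≤j*} λ_i ≥ 0` and `∑_{i≤j*+1} λ_i < 0` for some
`j* ∈ {1, …, d−1}`. Let `Λ_0 = 0` and `Λ_j ≤ ∑_{i≤j} λ_i` for all `j ≤ d`, and
let `j*_Λ` be the largest `j ∈ {0, …, d−1}` with `Λ_j ≥ 0`. Then `j*_Λ` is
well-defined, `j*_Λ ≤ j*`, and
`D_s := j*_Λ + Λ_{j*_Λ} / (Λ_{j*_Λ} − Λ_{j*_Λ+1})`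
satisfies `D_s ≤ j* + (∑_{i≤j*} λ_i) / |λ_{j*+1}|`. -/
theorem sharpness_dimension_comparison
    (d : ℕ) (lam : ℕ → ℝ)
    (hanti : ∀ i j : ℕ, 1 ≤ i → i ≤ j → j ≤ d → lam j ≤ lam i)
    (jstar : ℕ) (hjstar1 : 1 ≤ jstar) (hjstard : jstar ≤ d - 1)
    (hsum_nonneg : 0 ≤ ∑ i ∈ Finset.Icc 1 jstar, lam i)
    (hsum_neg : (∑ i ∈ Finset.Icc 1 (jstar + 1), lam i) < 0)
    (Λ : ℕ → ℝ) (hΛ0 : Λ 0 = 0)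
    (hΛle : ∀ j : ℕ, j ≤ d → Λ j ≤ ∑ i ∈ Finset.Icc 1 j, lam i) :
    (∃ jΛ : ℕ, jΛ ≤ d - 1 ∧ 0 ≤ Λ jΛ ∧
        (∀ j : ℕ, j ≤ d - 1 → 0 ≤ Λ j → j ≤ jΛ)) ∧
    (∀ jΛ : ℕ, jΛ ≤ d - 1 → 0 ≤ Λ jΛ →
        (∀ j : ℕ, j ≤ d - 1 → 0 ≤ Λ j → j ≤ jΛ) →
        jΛ ≤ jstar ∧
        (jΛ : ℝ) + Λ jΛ / (Λ jΛ - Λ (jΛ + 1))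
          ≤ (jstar : ℝ) +
              (∑ i ∈ Finset.Icc 1 jstar, lam i) / |lam (jstar + 1)|) := by
  have hd2 : 2 ≤ d := by omega
  set S : ℕ → ℝ := fun j => ∑ i ∈ Finset.Icc 1 j, lam i with hS
  have hsplit : S (jstar + 1) = S jstar + lam (jstar + 1) := by
    simpa [hS] using Finset.sum_Icc_succ_top (by omega : 1 ≤ jstar + 1) lam
  have hlamneg : lam (jstar + 1) < 0 := by
    have : S (jstar + 1) < 0 := hsum_neg
    have h0 : (0:ℝ) ≤ S jstar := hsum_nonneg
    linarith
  have hSneg : ∀ j, jstar + 1 ≤ j → j ≤ d → S j < 0 := by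
    intro j hj
    induction j, hj using Nat.le_induction with
    | base => intro _; exact hsum_neg
    | succ n hn ih =>
      intro hnd
      have h1 : S (n + 1) = S n + lam (n + 1) := by
        simpa [hS] using Finset.sum_Icc_succ_top (by omega : 1 ≤ n + 1) lam
      have h2 : lam (n + 1) ≤ lam (jstar + 1) := hanti _ _ (by omega) (by omega) hnd
      have h3 := ih (by omega)
      linarith
  constructor
  · -- existence of the maximal jΛ
    classical
    have hne : ((Finset.Iic (d - 1)).filter (fun j => 0 ≤ Λ j)).Nonempty :=
      ⟨0, by simp [hΛ0]⟩
    refine ⟨((Finset.Iic (d - 1)).filter (fun j => 0 ≤ Λ j)).max' hne, ?_, ?_, ?_⟩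
    · have := Finset.max'_mem _ hne
      simp only [Finset.mem_filter, Finset.mem_Iic] at this
      exact this.1
    · have := Finset.max'_mem _ hne
      simp only [Finset.mem_filter, Finset.mem_Iic] at this
      exact this.2
    · intro j hj hΛj
      exact Finset.le_max' _ j (by simp [Finset.mem_filter, Finset.mem_Iic, hj, hΛj])
  · intro jΛ hjd hΛnn hmax
    have hjle : jΛ ≤ jstar := by
      by_contra hc
      have h1 : Λ jΛ ≤ S jΛ := hΛle _ (by omega)
      have h2 : S jΛ < 0 := hSneg _ (by omega) (by omega)
      linarith
    have hb : Λ (jΛ + 1) < 0 := by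
      by_cases h : jΛ + 1 ≤ d - 1
      · by_contra hc
        push_neg at hc
        have := hmax _ h hc
        omega
      · have hje : jΛ = jstar := by omega
        have h1 : Λ (jΛ + 1) ≤ S (jΛ + 1) := hΛle _ (by omega)
        have h2 : S (jΛ + 1) < 0 := hSneg _ (by omega) (by omega)
        linarith
    have hpos : 0 < Λ jΛ - Λ (jΛ + 1) := by linarith
    have habs : |lam (jstar + 1)| = S jstar - S (jstar + 1) := by
      rw [abs_of_neg hlamneg]; linarith
    have hABpos : 0 < S jstar - S (jstar + 1) := by
      have : S (jstar + 1) < 0 := hsum_neg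
      linarith [hsum_nonneg]
    refine ⟨hjle, ?_⟩
    show (jΛ : ℝ) + Λ jΛ / (Λ jΛ - Λ (jΛ + 1)) ≤ (jstar : ℝ) + S jstar / |lam (jstar + 1)|
    rw [habs]
    rcases eq_or_lt_of_le hjle with heq | hlt
    · subst heq
      have haA : Λ jΛ ≤ S jΛ := hΛle _ (by omega)
      have hbB : Λ (jΛ + 1) ≤ S (jΛ + 1) := hΛle _ (by omega)
      have key : Λ jΛ / (Λ jΛ - Λ (jΛ + 1)) ≤ S jΛ / (S jΛ - S (jΛ + 1)) := by
        rw [div_le_div_iff₀ hpos hABpos]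
        nlinarith [mul_le_mul haA (by linarith : -S (jΛ + 1) ≤ -Λ (jΛ + 1))
          (by linarith [hsum_neg] : (0:ℝ) ≤ -S (jΛ + 1)) (le_trans hΛnn haA)]
      linarith
    · have hg : Λ jΛ / (Λ jΛ - Λ (jΛ + 1)) ≤ 1 := by
        rw [div_le_one hpos]; linarith
      have hrhs : 0 ≤ S jstar / (S jstar - S (jstar + 1)) :=
        div_nonneg hsum_nonneg hABpos.le
      have hcast : (jΛ : ℝ) + 1 ≤ (jstar : ℝ) := by exact_mod_cast hlt
      linarith
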